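/- arXiv:2512.04255 — 5 statements merged into one kernel-verified Lean document; each statement's English description precedes it below -/
import Mathlib

section
/- For a bipartite state ρ_{AB} on a tensor product of finite-dimensional spaces, the j-th mode of the reduced state ρ_A = tr_B(ρ_{AB}) with respect to L_A equals the partial trace over B of the j-th global mode of ρ_{AB} with respect to L_{AB} = L_A ⊗ I + I ⊗ L_B, where L_A, L_B are the local number operators. -/
open Matrix ComplexOrder

/-- The `j`th local mode with respect to the number operator. -/
def mode (d : ℕ) (j : ℤ) (ρ : Matrix (Fin d) (Fin d) ℂ) : Matrix (Fin d) (Fin d) ℂ :=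
  Matrix.of fun m n => if (m : ℤ) - (n : ℤ) = j then ρ m n else 0

/-- The `j`th global mode with respect to `L_AB = L_A ⊗ I + I ⊗ L_B`. -/
def gmode (d : ℕ) (j : ℤ) (ρ : Matrix (Fin d × Fin d) (Fin d × Fin d) ℂ) :
    Matrix (Fin d × Fin d) (Fin d × Fin d) ℂ :=
  Matrix.of fun x y =>
    if ((x.1 : ℤ) + (x.2 : ℤ)) - ((y.1 : ℤ) + (y.2 : ℤ)) = j then ρ x y else 0

/-- The partial trace over subsystem `B`. -/
noncomputable def ptraceB (d : ℕ) (ρ : Matrix (Fin d × Fin d) (Fin d × Fin d) ℂ) :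
    Matrix (Fin d) (Fin d) ℂ :=
  Matrix.of fun a c => ∑ b : Fin d, ρ (a, b) (c, b)

/-- The `j`th local mode of the reduced state is the partial trace of the `j`th
global mode. -/
theorem local_mode_eq_ptrace_global_mode {d : ℕ}
    (ρ : Matrix (Fin d × Fin d) (Fin d × Fin d) ℂ)
    (hρ : ρ.PosSemidef) (htr : ρ.trace = 1) (j : ℤ) :
    mode d j (ptraceB d ρ) = ptraceB d (gmode d j ρ) := by
  ext m n
  simp only [mode, gmode, ptraceB, Matrix.of_apply]
  have h : ∀ b : Fin d, ((m : ℤ) + b) - ((n : ℤ) + b) = (m : ℤ) - n := by intro b; ring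
  by_cases hc : (m : ℤ) - (n : ℤ) = j
  · simp [hc, h]
  · simp [hc, h]
end

section
/- Under the Bloch recurrence with n_x² + n_z² ≤ 1, the coherence after any number m of steps satisfies |n_x^m| ≤ √(n_x² + n_z²) = √(2 tr(ρ²) − 1), where the initial state ρ has purity tr(ρ²) = (1 + n_x² + n_z²)/2. -/
/-- One step of the Bloch-vector recurrence: `(n_x, n_z) ↦ (n_x √(1 + n_z²), n_z (1 − n_x²/(1 + n_z²)))`. -/
noncomputable def blochStep (p : ℝ × ℝ) : ℝ × ℝ :=
  (p.1 * Real.sqrt (1 + p.2 ^ 2), p.2 * (1 - p.1 ^ 2 / (1 + p.2 ^ 2)))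

lemma aux_ineq (a b : ℝ) (ha : 0 ≤ a) (hb : 0 ≤ b) (h : a + b ≤ 1) :
    a * (1 + b) + b * (1 - a / (1 + b)) ^ 2 ≤ a + b := by
  have hs : (0:ℝ) < 1 + b := by linarith
  rw [← sub_nonneg]
  have heq : a + b - (a * (1 + b) + b * (1 - a / (1 + b)) ^ 2)
      = a * b * (1 - a - b ^ 2) / (1 + b) ^ 2 := by
    field_simp
    ring
  rw [heq]
  apply div_nonneg _ (sq_nonneg _)
  have hb1 : b ^ 2 ≤ b := by nlinarith
  have : 0 ≤ 1 - a - b ^ 2 := by linarith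
  positivity

lemma blochStep_norm_le (p : ℝ × ℝ) (h : p.1 ^ 2 + p.2 ^ 2 ≤ 1) :
    (blochStep p).1 ^ 2 + (blochStep p).2 ^ 2 ≤ p.1 ^ 2 + p.2 ^ 2 := by
  have hs : (0:ℝ) < 1 + p.2 ^ 2 := by positivity
  have hsq : Real.sqrt (1 + p.2 ^ 2) ^ 2 = 1 + p.2 ^ 2 := Real.sq_sqrt hs.le
  simp only [blochStep]
  have h1 : (p.1 * Real.sqrt (1 + p.2 ^ 2)) ^ 2 = p.1 ^ 2 * (1 + p.2 ^ 2) := by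
    rw [mul_pow, hsq]
  have h2 : (p.2 * (1 - p.1 ^ 2 / (1 + p.2 ^ 2))) ^ 2
      = p.2 ^ 2 * (1 - p.1 ^ 2 / (1 + p.2 ^ 2)) ^ 2 := by ring
  rw [h1, h2]
  exact aux_ineq _ _ (sq_nonneg _) (sq_nonneg _) h

/-- After any number of steps of the concatenation protocol, the coherence is bounded
by `√(n_x² + n_z²) = √(2 tr(ρ²) − 1)`, where `tr(ρ²) = (1 + n_x² + n_z²)/2`. -/
theorem coherence_bounded_by_purity (nx nz : ℝ) (hdisc : nx ^ 2 + nz ^ 2 ≤ 1) :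
    (∀ m : ℕ, |(blochStep^[m] (nx, nz)).1| ≤ Real.sqrt (nx ^ 2 + nz ^ 2)) ∧
      Real.sqrt (nx ^ 2 + nz ^ 2) =
        Real.sqrt (2 * ((1 + nx ^ 2 + nz ^ 2) / 2) - 1) := by
  constructor
  · intro m
    have key : ∀ m : ℕ, (blochStep^[m] (nx, nz)).1 ^ 2 + (blochStep^[m] (nx, nz)).2 ^ 2
        ≤ nx ^ 2 + nz ^ 2 := by
      intro m
      induction m with
      | zero => simp
      | succ k ih =>
        rw [Function.iterate_succ_apply']
        exact (blochStep_norm_le _ (ih.trans hdisc)).trans ih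
    have h1 := key m
    have h2 : |(blochStep^[m] (nx, nz)).1| = Real.sqrt (((blochStep^[m] (nx, nz)).1) ^ 2) := by
      rw [Real.sqrt_sq_eq_abs]
    rw [h2]
    apply Real.sqrt_le_sqrt
    nlinarith [sq_nonneg (blochStep^[m] (nx, nz)).2]
  · ring_nf
end

section
/- If the initial Bloch vector satisfies n_x^0 ≠ 0 and n_x² + n_z² ≤ 1, then the limit of n_z^m under the Bloch recurrence is 0 (and both limits exist by monotone convergence). -/
open Filter

lemma bloch_inv (x z : ℝ) (h : x ^ 2 + z ^ 2 ≤ 1) (hz : 0 ≤ z) :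
    (blochStep (x, z)).1 ^ 2 + (blochStep (x, z)).2 ^ 2 ≤ 1 ∧ 0 ≤ (blochStep (x, z)).2 := by
  have hu : (0:ℝ) < 1 + z ^ 2 := by positivity
  have hx2 : x ^ 2 ≤ 1 + z ^ 2 := by nlinarith [sq_nonneg z]
  have hfac0 : 0 ≤ 1 - x ^ 2 / (1 + z ^ 2) := by
    rw [sub_nonneg, div_le_one hu]; exact hx2
  simp only [blochStep]
  constructor
  · have h2 : (0:ℝ) ≤ 1 - x ^ 2 - z ^ 2 := by linarith
    have key : x ^ 2 * (1 + z ^ 2) * (1 + z ^ 2) ^ 2 + z ^ 2 * (1 + z ^ 2 - x ^ 2) ^ 2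
        ≤ (1 + z ^ 2) ^ 2 := by
      nlinarith [mul_nonneg h2 (by positivity : (0:ℝ) ≤ 1 + 2 * z ^ 2 + z ^ 6),
        mul_nonneg (mul_nonneg h2 (sq_nonneg z)) (sq_nonneg x),
        sq_nonneg (z ^ 2 * (1 - z ^ 2))]
    have hrw : (1 - x ^ 2 / (1 + z ^ 2)) ^ 2 = (1 + z ^ 2 - x ^ 2) ^ 2 / (1 + z ^ 2) ^ 2 := by
      field_simp
    rw [mul_pow, Real.sq_sqrt hu.le, mul_pow, hrw]
    calc x ^ 2 * (1 + z ^ 2) + z ^ 2 * ((1 + z ^ 2 - x ^ 2) ^ 2 / (1 + z ^ 2) ^ 2)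
        = (x ^ 2 * (1 + z ^ 2) * (1 + z ^ 2) ^ 2 + z ^ 2 * (1 + z ^ 2 - x ^ 2) ^ 2)
            / (1 + z ^ 2) ^ 2 := by field_simp
      _ ≤ 1 := by rw [div_le_one (by positivity)]; exact key
  · exact mul_nonneg hz hfac0

/-- If the initial state is coherent (`n_x ≠ 0`), the `z`-component tends to `0`
under the Bloch recurrence, and the `x`-component converges. -/
theorem bloch_z_tendsto_zero (nx nz : ℝ) (hdisc : nx ^ 2 + nz ^ 2 ≤ 1)
    (hx : nx ≠ 0) (hz : 0 ≤ nz) :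
    Tendsto (fun m => (blochStep^[m] (nx, nz)).2) atTop (nhds 0) ∧
      ∃ a : ℝ, Tendsto (fun m => (blochStep^[m] (nx, nz)).1) atTop (nhds a) := by
  set X : ℕ → ℝ := fun m => (blochStep^[m] (nx, nz)).1 with hXdef
  set Z : ℕ → ℝ := fun m => (blochStep^[m] (nx, nz)).2 with hZdef
  have hiter : ∀ m, blochStep^[m + 1] (nx, nz) = blochStep (blochStep^[m] (nx, nz)) :=
    fun m => Function.iterate_succ_apply' _ _ _
  have hpair : ∀ m, (X m, Z m) = blochStep^[m] (nx, nz) := fun m => rfl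
  have hinv : ∀ m, X m ^ 2 + Z m ^ 2 ≤ 1 ∧ 0 ≤ Z m := by
    intro m
    induction m with
    | zero => exact ⟨hdisc, hz⟩
    | succ n ih =>
      have h := bloch_inv (X n) (Z n) ih.1 ih.2
      rw [hpair n] at h
      simpa [hXdef, hZdef, hiter n] using h
  have hXs : ∀ m, X (m + 1) = X m * Real.sqrt (1 + Z m ^ 2) := by
    intro m; simp [hXdef, hZdef, hiter m, blochStep]
  have hZs : ∀ m, Z (m + 1) = Z m * (1 - X m ^ 2 / (1 + Z m ^ 2)) := by
    intro m; simp [hXdef, hZdef, hiter m, blochStep]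
  have hXsq : ∀ m, X (m + 1) ^ 2 = X m ^ 2 * (1 + Z m ^ 2) := by
    intro m; rw [hXs m, mul_pow, Real.sq_sqrt (by positivity)]
  -- X m ^ 2 is monotone and bounded above by 1
  have hmono : Monotone fun m => X m ^ 2 := by
    apply monotone_nat_of_le_succ
    intro m
    rw [hXsq m]
    nlinarith [sq_nonneg (X m), sq_nonneg (Z m)]
  have hbddA : BddAbove (Set.range fun m => X m ^ 2) := by
    refine ⟨1, ?_⟩
    rintro y ⟨m, rfl⟩
    show X m ^ 2 ≤ 1
    nlinarith [(hinv m).1, sq_nonneg (Z m)]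
  -- Z is antitone and bounded below by 0
  have hanti : Antitone Z := by
    apply antitone_nat_of_succ_le
    intro m
    rw [hZs m]
    have : 1 - X m ^ 2 / (1 + Z m ^ 2) ≤ 1 := by
      have : (0:ℝ) ≤ X m ^ 2 / (1 + Z m ^ 2) := by positivity
      linarith
    exact mul_le_of_le_one_right (hinv m).2 this
  have hbddB : BddBelow (Set.range Z) := by
    refine ⟨0, ?_⟩
    rintro y ⟨m, rfl⟩
    exact (hinv m).2
  set B := ⨆ m, X m ^ 2 with hBdef
  set L := ⨅ m, Z m with hLdef
  have hXt : Tendsto (fun m => X m ^ 2) atTop (nhds B) := tendsto_atTop_ciSup hmono hbddA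
  have hZt : Tendsto Z atTop (nhds L) := tendsto_atTop_ciInf hanti hbddB
  have hL0 : 0 ≤ L := le_ciInf fun m => (hinv m).2
  have hBlb : nx ^ 2 ≤ B := by
    have := le_ciSup hbddA 0
    simpa [hXdef] using this
  have hBpos : 0 < B := lt_of_lt_of_le (by positivity) hBlb
  -- limit equation : B = B * (1 + L^2)
  have ht1 : Tendsto (fun m => X (m + 1) ^ 2) atTop (nhds B) :=
    hXt.comp (tendsto_add_atTop_nat 1)
  have ht2 : Tendsto (fun m => X m ^ 2 * (1 + Z m ^ 2)) atTop (nhds (B * (1 + L ^ 2))) :=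
    hXt.mul (tendsto_const_nhds.add (hZt.pow 2))
  have heq : B = B * (1 + L ^ 2) := by
    refine tendsto_nhds_unique ht1 ?_
    exact ht2.congr fun m => (hXsq m).symm
  have hLzero : L = 0 := by
    have hL2 : L ^ 2 = 0 := by nlinarith
    exact pow_eq_zero_iff two_ne_zero |>.mp hL2
  refine ⟨hLzero ▸ hZt, ?_⟩
  -- convergence of X, by sign cases
  rcases hx.lt_or_gt with hneg | hpos
  · have hXneg : ∀ m, X m ≤ 0 := by
      intro m
      induction m with
      | zero => simpa [hXdef] using hneg.le
      | succ n ih =>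
        rw [hXs n]
        exact mul_nonpos_iff.mpr (Or.inr ⟨ih, Real.sqrt_nonneg _⟩)
    refine ⟨-Real.sqrt B, ?_⟩
    have h1 : Tendsto (fun m => -Real.sqrt (X m ^ 2)) atTop (nhds (-Real.sqrt B)) :=
      (hXt.sqrt).neg
    refine h1.congr fun m => ?_
    rw [Real.sqrt_sq_eq_abs, abs_of_nonpos (hXneg m), neg_neg]
  · have hXpos : ∀ m, 0 ≤ X m := by
      intro m
      induction m with
      | zero => simpa [hXdef] using hpos.le
      | succ n ih =>
        rw [hXs n]
        exact mul_nonneg ih (Real.sqrt_nonneg _)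
    refine ⟨Real.sqrt B, ?_⟩
    refine (hXt.sqrt).congr fun m => ?_
    rw [Real.sqrt_sq (hXpos m)]
end

section
/- Let P be a linear map between finite-dimensional inner product spaces with orthonormal bases {φ_i}, {ψ_j}. For any shift j, the sum over n of |⟨ψ_{n+j}, P φ_n⟩| (a sum of k nonzero terms along a diagonal) is at most the k-th Ky-Fan norm of P, i.e., the sum of the k largest singular values of P. -/
open Matrix ComplexOrder

/-- The singular values of a rectangular complex matrix: square roots of the
eigenvalues of `PᴴP`. -/
noncomputable def singularValues {m n : ℕ} (P : Matrix (Fin m) (Fin n) ℂ) :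
    Fin n → ℝ :=
  fun i => Real.sqrt ((Matrix.posSemidef_conjTranspose_mul_self P).1.eigenvalues i)

/-- The `k`th Ky-Fan norm: the sum of the `k` largest singular values, expressed as
the supremum over `k`-element subsets (valid since singular values are nonnegative). -/
noncomputable def kyFan {m n : ℕ} (k : ℕ) (P : Matrix (Fin m) (Fin n) ℂ) : ℝ :=
  sSup {x : ℝ | ∃ s : Finset (Fin n), s.card = k ∧ x = ∑ i ∈ s, singularValues P i}

lemma aux_select {n k : ℕ} (σ c : Fin n → ℝ) (hσ : ∀ i, 0 ≤ σ i) (hc0 : ∀ i, 0 ≤ c i)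
    (hc1 : ∀ i, c i ≤ 1) (hck : ∑ i, c i ≤ (k : ℝ)) (hk : k ≤ n) :
    ∃ s : Finset (Fin n), s.card = k ∧ ∑ i, σ i * c i ≤ ∑ i ∈ s, σ i := by
  have hT : (Finset.powersetCard k (Finset.univ : Finset (Fin n))).Nonempty := by
    rw [Finset.powersetCard_nonempty]
    simpa using hk
  obtain ⟨s, hsT, hmax⟩ :=
    (Finset.powersetCard k (Finset.univ : Finset (Fin n))).exists_max_image
      (fun s => ∑ i ∈ s, σ i) hT
  have hscard : s.card = k := (Finset.mem_powersetCard.mp hsT).2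
  refine ⟨s, hscard, ?_⟩
  have hswap : ∀ i ∈ s, ∀ j, j ∉ s → σ j ≤ σ i := by
    intro i hi j hj
    have hji : j ∉ s.erase i := fun h => hj (Finset.mem_of_mem_erase h)
    have hs' : insert j (s.erase i) ∈ Finset.powersetCard k Finset.univ := by
      rw [Finset.mem_powersetCard]
      refine ⟨Finset.subset_univ _, ?_⟩
      rw [Finset.card_insert_of_notMem hji, Finset.card_erase_of_mem hi, hscard]
      have : 1 ≤ k := by
        rw [← hscard]; exact Finset.card_pos.mpr ⟨i, hi⟩
      omega
    have := hmax _ hs'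
    rw [Finset.sum_insert hji] at this
    have h2 : ∑ x ∈ s.erase i, σ x + σ i = ∑ x ∈ s, σ x := Finset.sum_erase_add s σ hi
    linarith
  rcases s.eq_empty_or_nonempty with h | hne
  · subst h
    simp only [Finset.card_empty] at hscard
    have hzero : ∀ i ∈ Finset.univ, c i = 0 := by
      intro i _
      have h1 : ∑ i, c i = 0 :=
        le_antisymm (by rw [← hscard] at hck; simpa using hck)
          (Finset.sum_nonneg fun i _ => hc0 i)
      exact (Finset.sum_eq_zero_iff_of_nonneg (fun i _ => hc0 i)).mp h1 i (Finset.mem_univ i)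
    simp only [Finset.sum_empty]
    calc ∑ i, σ i * c i = 0 := Finset.sum_eq_zero fun i _ => by rw [hzero i (Finset.mem_univ i), mul_zero]
    _ ≤ 0 := le_refl 0
  · obtain ⟨i₀, hi₀, hmin⟩ := s.exists_min_image σ hne
    set t := σ i₀ with ht
    have ht0 : 0 ≤ t := hσ i₀
    have htle : ∀ i ∈ s, t ≤ σ i := hmin
    have htge : ∀ j, j ∉ s → σ j ≤ t := fun j hj => hswap i₀ hi₀ j hj
    have hsplit : ∑ i, σ i * c i = ∑ i ∈ s, σ i * c i + ∑ i ∈ Finset.univ \ s, σ i * c i := by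
      rw [add_comm, Finset.sum_sdiff (Finset.subset_univ s)]
    have hb1 : ∑ i ∈ Finset.univ \ s, σ i * c i ≤ t * ∑ i ∈ Finset.univ \ s, c i := by
      rw [Finset.mul_sum]
      apply Finset.sum_le_sum
      intro j hj
      have hjs : j ∉ s := (Finset.mem_sdiff.mp hj).2
      exact mul_le_mul_of_nonneg_right (htge j hjs) (hc0 j)
    have hb2 : ∑ i ∈ Finset.univ \ s, c i ≤ (k : ℝ) - ∑ i ∈ s, c i := by
      have : ∑ i ∈ Finset.univ \ s, c i + ∑ i ∈ s, c i = ∑ i, c i :=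
        Finset.sum_sdiff (Finset.subset_univ s)
      linarith
    have hb3 : t * ((k : ℝ) - ∑ i ∈ s, c i) = ∑ i ∈ s, t * (1 - c i) := by
      rw [Finset.sum_congr rfl (fun i _ => mul_sub t 1 (c i))]
      rw [Finset.sum_sub_distrib, ← Finset.mul_sum, ← Finset.mul_sum]
      simp [hscard, mul_sub]
    have hb4 : ∑ i ∈ s, σ i * c i + ∑ i ∈ s, t * (1 - c i) ≤ ∑ i ∈ s, σ i := by
      rw [← Finset.sum_add_distrib]
      apply Finset.sum_le_sum
      intro i hi
      have h1 := htle i hi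
      have h2 := hc1 i
      have h3 := hc0 i
      nlinarith
    have := mul_le_mul_of_nonneg_left hb2 ht0
    linarith

section
variable {m n : ℕ} (P : Matrix (Fin m) (Fin n) ℂ)

noncomputable def lamP : Fin n → ℝ :=
  (Matrix.posSemidef_conjTranspose_mul_self P).1.eigenvalues

noncomputable def WP : Matrix (Fin n) (Fin n) ℂ :=
  ((Matrix.posSemidef_conjTranspose_mul_self P).1.eigenvectorUnitary : Matrix (Fin n) (Fin n) ℂ)

noncomputable def wP : Fin n → Fin m → ℂ := fun i p => ∑ q, P p q * WP P q i

lemma lamP_nonneg (i : Fin n) : 0 ≤ lamP P i :=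
  (Matrix.posSemidef_conjTranspose_mul_self P).eigenvalues_nonneg i

lemma WP_mem : WP P ∈ Matrix.unitaryGroup (Fin n) ℂ :=
  ((Matrix.posSemidef_conjTranspose_mul_self P).1.eigenvectorUnitary).2

lemma gramP (i i' : Fin n) :
    star (wP P i) ⬝ᵥ wP P i' = if i = i' then (lamP P i : ℂ) else 0 := by
  have hdiag : star (WP P) * (Pᴴ * P) * WP P
      = diagonal (RCLike.ofReal ∘ lamP P) :=
    by
      have := (Matrix.posSemidef_conjTranspose_mul_self P).1.conjStarAlgAut_star_eigenvectorUnitary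
      rw [Unitary.conjStarAlgAut_star_apply] at this
      exact this
  have key : ((P * WP P)ᴴ * (P * WP P)) i i' = diagonal (RCLike.ofReal ∘ lamP P) i i' := by
    have hassoc : star (WP P) * Pᴴ * (P * WP P) = star (WP P) * (Pᴴ * P) * WP P := by
      simp only [Matrix.mul_assoc]
    rw [conjTranspose_mul, ← Matrix.star_eq_conjTranspose (WP P), hassoc, hdiag]
  have lhs_eq : ((P * WP P)ᴴ * (P * WP P)) i i' = star (wP P i) ⬝ᵥ wP P i' := by
    simp only [Matrix.mul_apply, Matrix.conjTranspose_apply, dotProduct, wP,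
      Pi.star_apply, RCLike.star_def, map_sum, _root_.map_mul]
  rw [← lhs_eq, key, Matrix.diagonal_apply]
  by_cases h : i = i' <;> simp [h, Function.comp]
lemma dot_star_self_eq (x : Fin m → ℂ) :
    star x ⬝ᵥ x = ((∑ p, ‖x p‖ ^ 2 : ℝ) : ℂ) := by
  simp only [dotProduct, Pi.star_apply, RCLike.star_def, Complex.ofReal_sum]
  refine Finset.sum_congr rfl fun p _ => ?_
  rw [Complex.conj_mul']
  norm_cast

lemma wP_norm (i : Fin n) : ∑ p, ‖wP P i p‖ ^ 2 = lamP P i := by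
  have := gramP P i i
  rw [if_pos rfl, dot_star_self_eq] at this
  exact_mod_cast this

noncomputable def uP : Fin n → Fin m → ℂ := fun i =>
  if lamP P i = 0 then 0 else ((Real.sqrt (lamP P i) : ℂ))⁻¹ • wP P i

lemma wP_eq (i : Fin n) (p : Fin m) :
    wP P i p = (Real.sqrt (lamP P i) : ℂ) * uP P i p := by
  unfold uP
  by_cases h : lamP P i = 0
  · rw [if_pos h]
    have h2 : ∑ p, ‖wP P i p‖ ^ 2 = 0 := by rw [wP_norm, h]
    have h3 : ‖wP P i p‖ ^ 2 = 0 :=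
      (Finset.sum_eq_zero_iff_of_nonneg (fun p _ => by positivity)).mp h2 p (Finset.mem_univ p)
    have : wP P i p = 0 := by
      have := pow_eq_zero_iff (n := 2) (by norm_num) |>.mp h3
      simpa using this
    simp [this]
  · rw [if_neg h]
    have hs : (Real.sqrt (lamP P i) : ℂ) ≠ 0 := by
      simp only [ne_eq, Complex.ofReal_eq_zero]
      exact Real.sqrt_ne_zero'.mpr (lt_of_le_of_ne (lamP_nonneg P i) (Ne.symm h))
    simp [Pi.smul_apply, smul_eq_mul]
    field_simp

lemma uP_gram (i i' : Fin n) :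
    star (uP P i) ⬝ᵥ uP P i' = if i = i' ∧ lamP P i ≠ 0 then 1 else 0 := by
  unfold uP
  by_cases h : lamP P i = 0
  · simp [h]
  by_cases h' : lamP P i' = 0
  · have hii : i ≠ i' := fun e => h (e ▸ h')
    simp [h, h', hii]
  · rw [if_neg h, if_neg h']
    have hgram := gramP P i i'
    simp only [star_smul, smul_dotProduct, dotProduct_smul, smul_eq_mul,
      star_inv₀, RCLike.star_def, Complex.conj_ofReal, hgram]
    by_cases hii : i = i'
    · subst hii
      rw [if_pos rfl, if_pos ⟨rfl, h⟩]
      have hsq : (Real.sqrt (lamP P i) : ℂ) * (Real.sqrt (lamP P i) : ℂ) = (lamP P i : ℂ) := by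
        norm_cast
        exact Real.mul_self_sqrt (lamP_nonneg P i)
      have hs : (Real.sqrt (lamP P i) : ℂ) ≠ 0 := by
        simp only [ne_eq, Complex.ofReal_eq_zero]
        exact Real.sqrt_ne_zero'.mpr (lt_of_le_of_ne (lamP_nonneg P i) (Ne.symm h))
      rw [← hsq]
      field_simp
    · rw [if_neg hii, if_neg (fun hc => hii hc.1)]
      simp
lemma uP_col_le (i : Fin n) : ∑ p, ‖uP P i p‖ ^ 2 ≤ 1 := by
  have h := uP_gram P i i
  rw [dot_star_self_eq] at h
  by_cases hl : lamP P i ≠ 0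
  · rw [if_pos ⟨rfl, hl⟩] at h
    have : (∑ p, ‖uP P i p‖ ^ 2 : ℝ) = 1 := by exact_mod_cast h
    linarith
  · rw [if_neg (fun hc => hl hc.2)] at h
    have : (∑ p, ‖uP P i p‖ ^ 2 : ℝ) = 0 := by exact_mod_cast h
    linarith

lemma uP_bessel (p : Fin m) : ∑ i, ‖uP P i p‖ ^ 2 ≤ 1 := by
  classical
  have horth : Orthonormal ℂ (fun i : {i : Fin n // lamP P i ≠ 0} =>
      ((WithLp.equiv 2 (Fin m → ℂ)).symm (uP P i) : EuclideanSpace ℂ (Fin m))) := by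
    rw [orthonormal_iff_ite]
    intro i j
    rw [WithLp.equiv_symm_apply, EuclideanSpace.inner_toLp_toLp, dotProduct_comm, uP_gram]
    by_cases h : i = j
    · subst h; simp [i.2]
    · have h2 : (i : Fin n) ≠ (j : Fin n) := fun e => h (Subtype.ext e)
      simp [h, h2]
  have hb := horth.sum_inner_products_le (x := EuclideanSpace.single p (1 : ℂ))
    (s := Finset.univ)
  have hx : ‖(EuclideanSpace.single p (1 : ℂ) : EuclideanSpace ℂ (Fin m))‖ = 1 := by
    rw [EuclideanSpace.norm_single]; simp
  have hterm : ∀ i : {i : Fin n // lamP P i ≠ 0},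
      ‖(inner ℂ ((WithLp.equiv 2 (Fin m → ℂ)).symm (uP P i))
        (EuclideanSpace.single p (1 : ℂ)) : ℂ)‖ ^ 2 = ‖uP P (i : Fin n) p‖ ^ 2 := by
    intro i
    rw [EuclideanSpace.inner_single_right]
    simp
  rw [hx] at hb
  simp only [hterm, one_pow] at hb
  have hfilter : ∑ i ∈ Finset.univ.filter (fun i => lamP P i ≠ 0), ‖uP P i p‖ ^ 2
      = ∑ i : {i : Fin n // lamP P i ≠ 0}, ‖uP P (i : Fin n) p‖ ^ 2 := by
    apply Finset.sum_subtype
    intro i; simp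
  have hall : ∑ i, ‖uP P i p‖ ^ 2
      = ∑ i ∈ Finset.univ.filter (fun i => lamP P i ≠ 0), ‖uP P i p‖ ^ 2 := by
    symm
    apply Finset.sum_filter_of_ne
    intro i _ hne
    intro hl
    apply hne
    unfold uP
    rw [if_pos hl]
    simp
  rw [hall, hfilter]
  exact hb

lemma WP_col (i : Fin n) : ∑ q, ‖WP P q i‖ ^ 2 = 1 := by
  have h1 : star (WP P) * WP P = 1 := Matrix.mem_unitaryGroup_iff'.mp (WP_mem P)
  have h2 : (star (WP P) * WP P) i i = 1 := by rw [h1]; simp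
  rw [Matrix.mul_apply] at h2
  have h3 : star (fun q => WP P q i) ⬝ᵥ (fun q => WP P q i) = 1 := by
    rw [← h2]; simp [dotProduct, Matrix.star_apply]
  rw [dot_star_self_eq] at h3
  exact_mod_cast h3

lemma WP_row (q : Fin n) : ∑ i, ‖WP P q i‖ ^ 2 = 1 := by
  have h1 : WP P * star (WP P) = 1 := Matrix.mem_unitaryGroup_iff.mp (WP_mem P)
  have h2 : (WP P * star (WP P)) q q = 1 := by rw [h1]; simp
  rw [Matrix.mul_apply] at h2
  have h3 : star (fun i => WP P q i) ⬝ᵥ (fun i => WP P q i) = 1 := by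
    rw [← h2]
    simp only [dotProduct, Pi.star_apply, Matrix.star_apply, RCLike.star_def]
    exact Finset.sum_congr rfl fun i _ => mul_comm _ _
  rw [dot_star_self_eq] at h3
  exact_mod_cast h3

lemma P_decomp (p : Fin m) (q : Fin n) :
    P p q = ∑ i, (Real.sqrt (lamP P i) : ℂ) * uP P i p * (starRingEnd ℂ) (WP P q i) := by
  have h1 : P = P * WP P * (WP P)ᴴ := by
    rw [Matrix.mul_assoc, ← Matrix.star_eq_conjTranspose,
      Matrix.mem_unitaryGroup_iff.mp (WP_mem P), Matrix.mul_one]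
  conv_lhs => rw [h1]
  rw [Matrix.mul_apply]
  refine Finset.sum_congr rfl fun i _ => ?_
  rw [Matrix.conjTranspose_apply]
  have : (P * WP P) p i = wP P i p := by simp [Matrix.mul_apply, wP]
  rw [this, wP_eq]
  simp [RCLike.star_def]
end

/-- The sum of the absolute values of the matrix elements of `P` along any diagonal
(of shift `j`, having `k` terms) is at most the `k`th Ky-Fan norm of `P`. -/
theorem diagonal_sum_le_kyFan {m n : ℕ} (P : Matrix (Fin m) (Fin n) ℂ) (j : ℤ) :
    (∑ pq ∈ Finset.univ.filter
        (fun pq : Fin m × Fin n => (pq.1 : ℤ) - (pq.2 : ℤ) = j),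
        ‖P pq.1 pq.2‖) ≤
      kyFan ((Finset.univ.filter
        (fun pq : Fin m × Fin n => (pq.1 : ℤ) - (pq.2 : ℤ) = j)).card) P := by
  classical
  set S := Finset.univ.filter
      (fun pq : Fin m × Fin n => (pq.1 : ℤ) - (pq.2 : ℤ) = j) with hS
  set k := S.card with hk
  have hSmem : ∀ a : Fin m × Fin n, a ∈ S → (a.1 : ℤ) - (a.2 : ℤ) = j := by
    intro a ha
    rw [hS, Finset.mem_filter] at ha
    exact ha.2
  have hfst : ∀ a ∈ S, ∀ b ∈ S, a.1 = b.1 → a = b := by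
    intro a ha b hb hab
    have h1 := hSmem a ha
    have h2 := hSmem b hb
    have h3 : (a.2 : ℤ) = (b.2 : ℤ) := by rw [hab] at h1; omega
    have h4 : a.2 = b.2 := by
      apply Fin.ext
      exact_mod_cast h3
    exact Prod.ext hab h4
  have hsnd : ∀ a ∈ S, ∀ b ∈ S, a.2 = b.2 → a = b := by
    intro a ha b hb hab
    have h1 := hSmem a ha
    have h2 := hSmem b hb
    have h3 : (a.1 : ℤ) = (b.1 : ℤ) := by rw [hab] at h1; omega
    have h4 : a.1 = b.1 := by
      apply Fin.ext
      exact_mod_cast h3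
    exact Prod.ext h4 hab
  have hkn : k ≤ n := by
    have h1 : (S.image Prod.snd).card = S.card :=
      Finset.card_image_of_injOn (fun a ha b hb h => hsnd a ha b hb h)
    calc k = (S.image Prod.snd).card := by rw [h1]
    _ ≤ (Finset.univ : Finset (Fin n)).card := Finset.card_le_univ _
    _ = n := by simp
  have hproj1 : ∀ f : Fin m → ℝ, (∀ p, 0 ≤ f p) → ∑ pq ∈ S, f pq.1 ≤ ∑ p, f p := by
    intro f hf
    rw [← Finset.sum_image (f := f) (g := Prod.fst)
      (fun a ha b hb h => hfst a ha b hb h)]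
    exact Finset.sum_le_sum_of_subset_of_nonneg (Finset.subset_univ _)
      (fun p _ _ => hf p)
  have hproj2 : ∀ f : Fin n → ℝ, (∀ q, 0 ≤ f q) → ∑ pq ∈ S, f pq.2 ≤ ∑ q, f q := by
    intro f hf
    rw [← Finset.sum_image (f := f) (g := Prod.snd)
      (fun a ha b hb h => hsnd a ha b hb h)]
    exact Finset.sum_le_sum_of_subset_of_nonneg (Finset.subset_univ _)
      (fun q _ _ => hf q)
  set σ : Fin n → ℝ := fun i => Real.sqrt (lamP P i) with hσ
  set c : Fin n → ℝ := fun i => ∑ pq ∈ S, ‖uP P i pq.1‖ * ‖WP P pq.2 i‖ with hc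
  have hσ0 : ∀ i, 0 ≤ σ i := fun i => Real.sqrt_nonneg _
  have hc0 : ∀ i, 0 ≤ c i := fun i =>
    Finset.sum_nonneg fun pq _ => mul_nonneg (norm_nonneg _) (norm_nonneg _)
  have step1 : ∑ pq ∈ S, ‖P pq.1 pq.2‖ ≤ ∑ i, σ i * c i := by
    calc ∑ pq ∈ S, ‖P pq.1 pq.2‖
        ≤ ∑ pq ∈ S, ∑ i, σ i * (‖uP P i pq.1‖ * ‖WP P pq.2 i‖) := by
          apply Finset.sum_le_sum
          intro pq _
          rw [P_decomp P pq.1 pq.2]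
          refine le_trans (norm_sum_le _ _) ?_
          apply Finset.sum_le_sum
          intro i _
          rw [norm_mul, norm_mul, Complex.norm_real, Complex.norm_conj,
            Real.norm_of_nonneg (Real.sqrt_nonneg _)]
          simp only [hσ, mul_assoc]
          exact le_refl _
    _ = ∑ i, σ i * c i := by
          rw [Finset.sum_comm]
          exact Finset.sum_congr rfl fun i _ => (Finset.mul_sum _ _ _).symm
  have hc1 : ∀ i, c i ≤ 1 := by
    intro i
    have hcs := Real.sum_mul_le_sqrt_mul_sqrt S
      (fun pq => ‖uP P i pq.1‖) (fun pq => ‖WP P pq.2 i‖)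
    have h1 : ∑ pq ∈ S, ‖uP P i pq.1‖ ^ 2 ≤ 1 :=
      le_trans (hproj1 (fun p => ‖uP P i p‖ ^ 2) (fun p => by positivity)) (uP_col_le P i)
    have h2 : ∑ pq ∈ S, ‖WP P pq.2 i‖ ^ 2 ≤ 1 :=
      le_trans (hproj2 (fun q => ‖WP P q i‖ ^ 2) (fun q => by positivity))
        (le_of_eq (WP_col P i))
    calc c i ≤ Real.sqrt (∑ pq ∈ S, ‖uP P i pq.1‖ ^ 2)
        * Real.sqrt (∑ pq ∈ S, ‖WP P pq.2 i‖ ^ 2) := hcs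
    _ ≤ Real.sqrt 1 * Real.sqrt 1 :=
        mul_le_mul (Real.sqrt_le_sqrt h1) (Real.sqrt_le_sqrt h2)
          (Real.sqrt_nonneg _) (Real.sqrt_nonneg _)
    _ = 1 := by rw [Real.sqrt_one, mul_one]
  have hck : ∑ i, c i ≤ (k : ℝ) := by
    have hswap : ∑ i, c i = ∑ pq ∈ S, ∑ i, ‖uP P i pq.1‖ * ‖WP P pq.2 i‖ :=
      Finset.sum_comm
    rw [hswap]
    calc ∑ pq ∈ S, ∑ i, ‖uP P i pq.1‖ * ‖WP P pq.2 i‖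
        ≤ ∑ pq ∈ S, (1 : ℝ) := by
          apply Finset.sum_le_sum
          intro pq _
          have hcs := Real.sum_mul_le_sqrt_mul_sqrt Finset.univ
            (fun i => ‖uP P i pq.1‖) (fun i => ‖WP P pq.2 i‖)
          calc ∑ i, ‖uP P i pq.1‖ * ‖WP P pq.2 i‖
              ≤ Real.sqrt (∑ i, ‖uP P i pq.1‖ ^ 2)
                * Real.sqrt (∑ i, ‖WP P pq.2 i‖ ^ 2) := hcs
          _ ≤ Real.sqrt 1 * Real.sqrt 1 :=
              mul_le_mul (Real.sqrt_le_sqrt (uP_bessel P pq.1))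
                (Real.sqrt_le_sqrt (le_of_eq (WP_row P pq.2)))
                (Real.sqrt_nonneg _) (Real.sqrt_nonneg _)
          _ = 1 := by rw [Real.sqrt_one, mul_one]
    _ = (k : ℝ) := by rw [Finset.sum_const, hk]; simp
  obtain ⟨s, hscard, hmain⟩ := aux_select σ c hσ0 hc0 hc1 hck hkn
  have hσeq : ∀ i, σ i = singularValues P i := fun i => rfl
  have hmem : (∑ i ∈ s, singularValues P i) ∈
      {x : ℝ | ∃ s : Finset (Fin n), s.card = k ∧ x = ∑ i ∈ s, singularValues P i} :=
    ⟨s, hscard, rfl⟩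
  have hbdd : BddAbove
      {x : ℝ | ∃ s : Finset (Fin n), s.card = k ∧ x = ∑ i ∈ s, singularValues P i} := by
    apply Set.Finite.bddAbove
    have hsub : {x : ℝ | ∃ s : Finset (Fin n), s.card = k ∧ x = ∑ i ∈ s, singularValues P i}
        ⊆ (fun s : Finset (Fin n) => ∑ i ∈ s, singularValues P i) '' Set.univ := by
      rintro x ⟨s, _, rfl⟩
      exact ⟨s, Set.mem_univ s, rfl⟩
    exact ((Set.finite_univ).image _).subset hsub
  have hle := le_csSup hbdd hmem
  calc ∑ pq ∈ S, ‖P pq.1 pq.2‖ ≤ ∑ i, σ i * c i := step1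
  _ ≤ ∑ i ∈ s, σ i := hmain
  _ = ∑ i ∈ s, singularValues P i := Finset.sum_congr rfl fun i _ => hσeq i
  _ ≤ kyFan k P := hle
end

section
/- If a bipartite state ρ_{AB} on C^d ⊗ C^d with respect to L_{AB} = L_A ⊗ I + I ⊗ L_B has ρ_{AB}^{(k)} = 0 for all k with 1 ≤ k ≤ d−1, but ρ_{AB}^{(k)} ≠ 0 for some k ≥ d, then ρ_{AB} is not a product state ρ_A ⊗ ρ_B. -/
open Matrix Kronecker ComplexOrder

/-- For a PSD matrix over ℂ, a nonzero off-diagonal entry forces the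
corresponding diagonal entry to be nonzero. -/
lemma psd_diag_ne_zero {n : Type*} [Fintype n] [DecidableEq n] {M : Matrix n n ℂ}
    (h : M.PosSemidef) {u v : n} (h0 : M u v ≠ 0) : M u u ≠ 0 := by
  by_cases huv : u = v
  · subst huv; exact h0
  intro huu
  have hvu : M v u = starRingEnd ℂ (M u v) := by
    have := h.1.apply v u
    simpa [RCLike.star_def] using this.symm
  have key : ∀ t : ℝ, (0 : ℝ) ≤ -2 * t * Complex.normSq (M u v) + (M v v).re := by
    intro t
    set c : ℂ := -(t : ℂ) * M u v with hc
    have hx := h.dotProduct_mulVec_nonneg (Pi.single u c + Pi.single v 1)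
    have hstar : star ((Pi.single u c : n → ℂ) + Pi.single v 1) =
        (Pi.single u (starRingEnd ℂ c) : n → ℂ) + Pi.single v 1 := by
      funext i
      by_cases hiu : i = u <;> by_cases hiv : i = v <;>
        simp_all [Pi.single_apply]
    rw [hstar, Matrix.mulVec_add] at hx
    have hmv : ∀ (w : n) (e : ℂ), M *ᵥ Pi.single w e = fun i => M i w * e := by
      intro w e; funext i; simp [Matrix.mulVec, dotProduct, Pi.single_apply]
    simp only [hmv] at hx
    have hval : (Pi.single u (starRingEnd ℂ c) + Pi.single v 1) ⬝ᵥ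
        ((fun i => M i u * c) + fun i => M i v * 1) =
        starRingEnd ℂ c * (M u u * c + M u v) + (M v u * c + M v v) := by
      simp [dotProduct_add, add_dotProduct, single_dotProduct, Pi.add_apply,
        mul_add, add_mul]
      ring
    rw [hval] at hx
    rw [huu, hvu, hc] at hx
    have hx' : (0 : ℂ) ≤ ((-2 * t * Complex.normSq (M u v) : ℝ) : ℂ) + M v v := by
      have h2 : starRingEnd ℂ (M u v) * M u v = (Complex.normSq (M u v) : ℂ) := by
        rw [mul_comm]; exact Complex.mul_conj _
      convert hx using 1
      have h1 : starRingEnd ℂ (-(t : ℂ) * M u v) = -(t : ℂ) * starRingEnd ℂ (M u v) := by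
        simp
      rw [h1]
      push_cast
      linear_combination (2 * (t : ℂ)) * h2
    rw [Complex.le_def] at hx'
    simpa using hx'.1
  have hpos : 0 < Complex.normSq (M u v) := by
    simpa [Complex.normSq_pos] using h0
  have := key (((M v v).re + 1) / (2 * Complex.normSq (M u v)))
  have h3 : -2 * (((M v v).re + 1) / (2 * Complex.normSq (M u v))) * Complex.normSq (M u v)
      = -((M v v).re + 1) := by
    field_simp
  rw [h3] at this
  linarith

/-- If a bipartite state has no modes `1 ≤ k ≤ d − 1` but some nonzero mode `k ≥ d`,
then it is not a product state; hence it carries correlations. -/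
theorem not_product_of_mode_gap {d : ℕ}
    (ρ : Matrix (Fin d × Fin d) (Fin d × Fin d) ℂ)
    (hρ : ρ.PosSemidef) (htr : ρ.trace = 1)
    (hlow : ∀ k : ℤ, 1 ≤ k → k ≤ (d : ℤ) - 1 → gmode d k ρ = 0)
    (hhigh : ∃ k : ℤ, (d : ℤ) ≤ k ∧ gmode d k ρ ≠ 0) :
    ¬∃ (ρA ρB : Matrix (Fin d) (Fin d) ℂ), ρ = ρA ⊗ₖ ρB := by
  rintro ⟨ρA, ρB, rfl⟩
  obtain ⟨k, hk, hne⟩ := hhigh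
  have hex : ∃ x y : Fin d × Fin d, gmode d k (ρA ⊗ₖ ρB) x y ≠ 0 := by
    by_contra hc
    push_neg at hc
    exact hne (by ext x y; simpa using hc x y)
  obtain ⟨⟨x1, x2⟩, ⟨y1, y2⟩, hxy⟩ := hex
  rw [gmode] at hxy
  simp only [Matrix.of_apply] at hxy
  by_cases hcond : ((x1 : ℤ) + (x2 : ℤ)) - ((y1 : ℤ) + (y2 : ℤ)) = k
  swap
  · exact hxy (if_neg hcond)
  rw [if_pos hcond] at hxy
  have hent : ρA x1 y1 * ρB x2 y2 ≠ 0 := by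
    simpa [Matrix.kroneckerMap_apply] using hxy
  have hdiag : (ρA ⊗ₖ ρB) (x1, x2) (x1, x2) ≠ 0 :=
    psd_diag_ne_zero (v := (y1, y2)) hρ (by simpa [Matrix.kroneckerMap_apply] using hent)
  have hBd : ρB x2 x2 ≠ 0 := by
    intro h
    apply hdiag
    simp [Matrix.kroneckerMap_apply, h]
  set a : ℤ := (x1 : ℤ) - (y1 : ℤ) with ha
  have hx2 : (x2 : ℤ) < d := by exact_mod_cast x2.isLt
  have hx1 : (x1 : ℤ) < d := by exact_mod_cast x1.isLt
  have hy2 : (0 : ℤ) ≤ (y2 : ℤ) := Int.ofNat_nonneg _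
  have hy1 : (0 : ℤ) ≤ (y1 : ℤ) := Int.ofNat_nonneg _
  have ha1 : 1 ≤ a := by omega
  have ha2 : a ≤ (d : ℤ) - 1 := by omega
  have hz := hlow a ha1 ha2
  have := congrFun (congrFun hz (x1, x2)) (y1, x2)
  rw [gmode] at this
  simp only [Matrix.of_apply] at this
  have hcone : ((x1 : ℤ) + (x2 : ℤ)) - ((y1 : ℤ) + (x2 : ℤ)) = a := by ring
  rw [if_pos hcone] at this
  have : ρA x1 y1 * ρB x2 x2 = 0 := by
    simpa [Matrix.kroneckerMap_apply] using this
  exact (mul_ne_zero (fun h => hent (by simp [h])) hBd) this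
end
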